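/- Let n be a positive integer and let Φ be a linear operator on the space ℝ_n[x] of real polynomials of degree at most n, mapping ℝ_n[x] to itself, such that Φ(1) is positive (i.e., (Φ(1))(x) > 0 for all real x). Then the following are equivalent: (1) Φ preserves the set of elliptic polynomials of degree ≤ n; (2) either Φ or −Φ preserves the set of positive polynomials of degree ≤ n; (3) either Φ or −Φ preserves the set of non-negative polynomials of degree ≤ n. -/

import Mathlib

open Polynomial Filter

private lemma exists_pos_lb (p : Polynomial ℝ) (hp : ∀ x : ℝ, 0 < p.eval x) :
    ∃ m : ℝ, 0 < m ∧ ∀ x : ℝ, m ≤ p.eval x := by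
  by_cases hdeg : 0 < p.degree
  · have habs : Tendsto (fun x => |p.eval x|) (Filter.cocompact ℝ) atTop := by
      rw [cocompact_eq_atBot_atTop, tendsto_sup]
      constructor
      · set q := p.comp (-X) with hq
        have hdq : 0 < q.degree := by
          rw [← natDegree_pos_iff_degree_pos] at hdeg ⊢
          rw [hq, natDegree_comp]
          simpa using hdeg
        have h2 := (q.abs_tendsto_atTop hdq).comp tendsto_neg_atBot_atTop
        have : (fun x => |q.eval x|) ∘ (fun x : ℝ => -x) = fun x => |p.eval x| := by
          funext x
          simp [hq, eval_comp]
        rwa [this] at h2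
      · exact p.abs_tendsto_atTop hdeg
    have heq : Tendsto (fun x => p.eval x) (Filter.cocompact ℝ) atTop := by
      refine habs.congr fun x => ?_
      exact abs_of_pos (hp x)
    obtain ⟨x0, hx0⟩ := (p.continuous_aeval).exists_forall_le heq
    exact ⟨p.eval x0, hp x0, hx0⟩
  · have : p.natDegree = 0 := by
      rw [← natDegree_pos_iff_degree_pos] at hdeg; omega
    obtain ⟨c, rfl⟩ := natDegree_eq_zero.mp this
    exact ⟨c, by simpa using hp 0, fun x => by simp⟩

theorem stmt_9 (n : ℕ) (hn : 0 < n) (Φ : Polynomial ℝ →ₗ[ℝ] Polynomial ℝ)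
    (hmap : ∀ p : Polynomial ℝ, p.natDegree ≤ n → (Φ p).natDegree ≤ n)
    (h1 : ∀ x : ℝ, 0 < (Φ 1).eval x) :
    ((∀ p : Polynomial ℝ, p.natDegree ≤ n → (∀ x : ℝ, p.eval x ≠ 0) →
        ∀ x : ℝ, (Φ p).eval x ≠ 0) ↔
      ((∀ p : Polynomial ℝ, p.natDegree ≤ n → (∀ x : ℝ, 0 < p.eval x) →
          ∀ x : ℝ, 0 < (Φ p).eval x) ∨
       (∀ p : Polynomial ℝ, p.natDegree ≤ n → (∀ x : ℝ, 0 < p.eval x) →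
          ∀ x : ℝ, 0 < ((-Φ) p).eval x))) ∧
    (((∀ p : Polynomial ℝ, p.natDegree ≤ n → (∀ x : ℝ, 0 < p.eval x) →
          ∀ x : ℝ, 0 < (Φ p).eval x) ∨
      (∀ p : Polynomial ℝ, p.natDegree ≤ n → (∀ x : ℝ, 0 < p.eval x) →
          ∀ x : ℝ, 0 < ((-Φ) p).eval x)) ↔
     ((∀ p : Polynomial ℝ, p.natDegree ≤ n → (∀ x : ℝ, 0 ≤ p.eval x) →
          ∀ x : ℝ, 0 ≤ (Φ p).eval x) ∨
      (∀ p : Polynomial ℝ, p.natDegree ≤ n → (∀ x : ℝ, 0 ≤ p.eval x) →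
          ∀ x : ℝ, 0 ≤ ((-Φ) p).eval x))) := by
  -- the (-Φ) alternatives are impossible
  have hnegpos : ¬ (∀ p : Polynomial ℝ, p.natDegree ≤ n → (∀ x : ℝ, 0 < p.eval x) →
      ∀ x : ℝ, 0 < ((-Φ) p).eval x) := by
    intro h
    have := h 1 (by simp) (by simp) 0
    simp only [LinearMap.neg_apply, eval_neg] at this
    linarith [h1 0]
  have hnegnn : ¬ (∀ p : Polynomial ℝ, p.natDegree ≤ n → (∀ x : ℝ, 0 ≤ p.eval x) →
      ∀ x : ℝ, 0 ≤ ((-Φ) p).eval x) := by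
    intro h
    have := h 1 (by simp) (by simp) 0
    simp only [LinearMap.neg_apply, eval_neg] at this
    linarith [h1 0]
  -- A : positivity preservation → ellipticity preservation
  have A : (∀ p : Polynomial ℝ, p.natDegree ≤ n → (∀ x : ℝ, 0 < p.eval x) →
        ∀ x : ℝ, 0 < (Φ p).eval x) →
      (∀ p : Polynomial ℝ, p.natDegree ≤ n → (∀ x : ℝ, p.eval x ≠ 0) →
        ∀ x : ℝ, (Φ p).eval x ≠ 0) := by
    intro hpos p hdeg hell x
    rcases (forall_or_exists_not (fun x : ℝ => 0 < p.eval x)) with hp | ⟨a, ha⟩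
    · exact (hpos p hdeg hp x).ne'
    · have ha' : p.eval a < 0 := lt_of_le_of_ne (not_lt.mp ha) (hell a)
      have hneg : ∀ y : ℝ, p.eval y < 0 := by
        intro y
        by_contra hy
        have hy' : 0 < p.eval y := lt_of_le_of_ne (not_lt.mp hy) (Ne.symm (hell y))
        have : (0 : ℝ) ∈ Set.range (fun t => p.eval t) := by
          apply intermediate_value_univ a y p.continuous_aeval
          exact ⟨ha'.le, hy'.le⟩
        obtain ⟨t, ht⟩ := this
        exact hell t ht
      have hdegn : (-p).natDegree ≤ n := by rwa [natDegree_neg]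
      have := hpos (-p) hdegn (fun y => by simpa using hneg y) x
      rw [map_neg, eval_neg] at this
      intro hc
      rw [hc] at this
      simp at this
  -- B : ellipticity preservation → nonnegativity preservation
  have B : (∀ p : Polynomial ℝ, p.natDegree ≤ n → (∀ x : ℝ, p.eval x ≠ 0) →
        ∀ x : ℝ, (Φ p).eval x ≠ 0) →
      (∀ p : Polynomial ℝ, p.natDegree ≤ n → (∀ x : ℝ, 0 ≤ p.eval x) →
        ∀ x : ℝ, 0 ≤ (Φ p).eval x) := by
    intro hell p hdeg hnn x
    by_contra hc
    push_neg at hc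
    set ε : ℝ := -(Φ p).eval x / (Φ 1).eval x with hε
    have hε0 : 0 < ε := div_pos (by linarith) (h1 x)
    have hq : (p + C ε).natDegree ≤ n := by
      refine le_trans (natDegree_add_le _ _) ?_
      simp [hdeg]
    have hqpos : ∀ y : ℝ, (p + C ε).eval y ≠ 0 := by
      intro y
      have := hnn y
      simp only [eval_add, eval_C]
      positivity
    have := hell (p + C ε) hq hqpos x
    have hC : (C ε : Polynomial ℝ) = ε • (1 : Polynomial ℝ) := by
      rw [smul_eq_C_mul, mul_one]
    rw [hC, map_add, map_smul, eval_add, eval_smul, smul_eq_mul] at this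
    apply this
    rw [hε, div_mul_cancel₀ _ (h1 x).ne']
    ring
  -- C : nonnegativity preservation → positivity preservation
  have C : (∀ p : Polynomial ℝ, p.natDegree ≤ n → (∀ x : ℝ, 0 ≤ p.eval x) →
        ∀ x : ℝ, 0 ≤ (Φ p).eval x) →
      (∀ p : Polynomial ℝ, p.natDegree ≤ n → (∀ x : ℝ, 0 < p.eval x) →
        ∀ x : ℝ, 0 < (Φ p).eval x) := by
    intro hnn p hdeg hpos x
    obtain ⟨m, hm0, hm⟩ := exists_pos_lb p hpos
    have hq : (p - C m).natDegree ≤ n := by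
      refine le_trans (natDegree_sub_le _ _) ?_
      simp [hdeg]
    have hqnn : ∀ y : ℝ, 0 ≤ (p - C m).eval y := by
      intro y; simp only [eval_sub, eval_C, sub_nonneg]; exact hm y
    have h2 := hnn (p - C m) hq hqnn x
    have hC : (C m : Polynomial ℝ) = m • (1 : Polynomial ℝ) := by
      rw [smul_eq_C_mul, mul_one]
    rw [hC, map_sub, map_smul, eval_sub, eval_smul, smul_eq_mul] at h2
    have := h1 x
    nlinarith
  constructor
  · constructor
    · intro hell
      exact Or.inl (C (B hell))
    · rintro (hpos | hneg)
      · exact A hpos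
      · exact absurd hneg hnegpos
  · constructor
    · rintro (hpos | hneg)
      · exact Or.inl (B (A hpos))
      · exact absurd hneg hnegpos
    · rintro (hnn | hneg)
      · exact Or.inl (C hnn)
      · exact absurd hneg hnegnn
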